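/- Let S and A be nonempty finite sets, let m ≥ 1, let W^1,…,W^m ⊆ Δ(S) be nonempty compact sets, and fix coefficients u_{sa} ∈ Δ({1,…,m}) for each (s,a) ∈ S×A. Let 𝒫 = {(∑_{i=1}^m u^i_{sa} w^i)_{(s,a)∈S×A} : w^i ∈ W^i for each i} be the associated r-rectangular uncertainty set. Then 𝒫 is compact, 𝒫 satisfies the weak sa-SSP, and hence 𝒫 is weakly sa-tractable. -/

import Mathlib

open scoped BigOperators

namespace RMDP

variable {S A : Type*} [Fintype S] [Fintype A]

def IsKernel (P : S → A → S → ℝ) : Prop := ∀ s a, P s a ∈ stdSimplex ℝ S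

def IsPolicy (π : S → A → ℝ) : Prop := ∀ s, π s ∈ stdSimplex ℝ A

def NextStateIndep (r : S → A → S → ℝ) : Prop :=
  ∀ (s : S) (a : A) (s' s'' : S), r s a s' = r s a s''

noncomputable def minOver {K : Type*} (K0 : Set K) (f : K → ℝ) : ℝ := sInf (f '' K0)

noncomputable def maxOver {K : Type*} (K0 : Set K) (f : K → ℝ) : ℝ := sSup (f '' K0)

noncomputable def TpiP (π : S → A → ℝ) (r : S → A → S → ℝ) (γ : ℝ)
    (P : S → A → S → ℝ) (v : S → ℝ) : S → ℝ :=
  fun s => ∑ a, π s a * ∑ s', P s a s' * (r s a s' + γ * v s')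

noncomputable def Tpi (US : Set (S → A → S → ℝ)) (π : S → A → ℝ)
    (r : S → A → S → ℝ) (γ : ℝ) (v : S → ℝ) : S → ℝ :=
  fun s => minOver US (fun P => ∑ a, π s a * ∑ s', P s a s' * (r s a s' + γ * v s'))

noncomputable def TpiHat (US : Set (S → A → S → ℝ)) (π : S → A → ℝ)
    (r : S → A → S → ℝ) (γ : ℝ) (v : S → ℝ) : S → ℝ :=
  fun s => ∑ a, π s a * minOver US (fun P => ∑ s', P s a s' * (r s a s' + γ * v s'))

noncomputable def Topt (US : Set (S → A → S → ℝ)) (r : S → A → S → ℝ) (γ : ℝ)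
    (v : S → ℝ) : S → ℝ :=
  fun s => maxOver (stdSimplex ℝ A)
    (fun p => minOver US (fun P => ∑ a, p a * ∑ s', P s a s' * (r s a s' + γ * v s')))

def IsHPolicy (π : List (S × A) → S → A → ℝ) : Prop := ∀ h s, π h s ∈ stdSimplex ℝ A

noncomputable def expRHH (π : List (S × A) → S → A → ℝ)
    (Q : List (S × A) → S → A → S → ℝ) (r : S → A → S → ℝ) :
    ℕ → List (S × A) → S → ℝ
  | 0, h, s => ∑ a, π h s a * ∑ s', Q (h ++ [(s, a)]) s a s' * r s a s'
  | (t + 1), h, s =>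
      ∑ a, π h s a * ∑ s', Q (h ++ [(s, a)]) s a s' * expRHH π Q r t (h ++ [(s, a)]) s'

noncomputable def vHH (π : List (S × A) → S → A → ℝ)
    (Q : List (S × A) → S → A → S → ℝ) (r : S → A → S → ℝ) (γ : ℝ) (s : S) : ℝ :=
  ∑' t : ℕ, γ ^ t * expRHH π Q r t [] s

def STractable (US : Set (S → A → S → ℝ)) : Prop :=
  ∀ π : S → A → ℝ, IsPolicy π →
    ∀ (r : S → A → S → ℝ) (γ : ℝ), 0 ≤ γ → γ < 1 →
      ∀ v : (S → A → S → ℝ) → S → ℝ, (∀ P ∈ US, TpiP π r γ P (v P) = v P) →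
        ∀ u : S → ℝ, Tpi US π r γ u = u →
          ∀ μ ∈ stdSimplex ℝ S,
            minOver US (fun P => ∑ s, μ s * v P s) = ∑ s, μ s * u s

def SATractable (US : Set (S → A → S → ℝ)) : Prop :=
  ∀ π : S → A → ℝ, IsPolicy π →
    ∀ (r : S → A → S → ℝ) (γ : ℝ), 0 ≤ γ → γ < 1 →
      ∀ v : (S → A → S → ℝ) → S → ℝ, (∀ P ∈ US, TpiP π r γ P (v P) = v P) →
        ∀ uhat : S → ℝ, TpiHat US π r γ uhat = uhat →
          ∀ μ ∈ stdSimplex ℝ S,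
            minOver US (fun P => ∑ s, μ s * v P s) = ∑ s, μ s * uhat s

def WeakSTractable (US : Set (S → A → S → ℝ)) : Prop :=
  ∀ π : S → A → ℝ, IsPolicy π →
    ∀ (r : S → A → S → ℝ), NextStateIndep r → ∀ γ : ℝ, 0 ≤ γ → γ < 1 →
      ∀ v : (S → A → S → ℝ) → S → ℝ, (∀ P ∈ US, TpiP π r γ P (v P) = v P) →
        ∀ u : S → ℝ, Tpi US π r γ u = u →
          ∀ μ ∈ stdSimplex ℝ S,
            minOver US (fun P => ∑ s, μ s * v P s) = ∑ s, μ s * u s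

def WeakSATractable (US : Set (S → A → S → ℝ)) : Prop :=
  ∀ π : S → A → ℝ, IsPolicy π →
    ∀ (r : S → A → S → ℝ), NextStateIndep r → ∀ γ : ℝ, 0 ≤ γ → γ < 1 →
      ∀ v : (S → A → S → ℝ) → S → ℝ, (∀ P ∈ US, TpiP π r γ P (v P) = v P) →
        ∀ uhat : S → ℝ, TpiHat US π r γ uhat = uhat →
          ∀ μ ∈ stdSimplex ℝ S,
            minOver US (fun P => ∑ s, μ s * v P s) = ∑ s, μ s * uhat s

def SSPs (US : Set (S → A → S → ℝ)) : Prop :=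
  ∀ V : S → A → S → ℝ, ∃ Pstar ∈ US, ∀ s : S, ∀ P ∈ US,
    (∑ a, ∑ s', Pstar s a s' * V s a s') ≤ ∑ a, ∑ s', P s a s' * V s a s'

def SSPsa (US : Set (S → A → S → ℝ)) : Prop :=
  ∀ V : S → A → S → ℝ, ∃ Pstar ∈ US, ∀ (s : S) (a : A), ∀ P ∈ US,
    (∑ s', Pstar s a s' * V s a s') ≤ ∑ s', P s a s' * V s a s'

def WeakSSPs (US : Set (S → A → S → ℝ)) : Prop :=
  ∀ π : S → A → ℝ, IsPolicy π → ∀ V : S → ℝ, ∃ Pstar ∈ US, ∀ s : S, ∀ P ∈ US,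
    (∑ a, π s a * ∑ s', Pstar s a s' * V s') ≤ ∑ a, π s a * ∑ s', P s a s' * V s'

def WeakSSPsa (US : Set (S → A → S → ℝ)) : Prop :=
  ∀ V : S → ℝ, ∃ Pstar ∈ US, ∀ (s : S) (a : A), ∀ P ∈ US,
    (∑ s', Pstar s a s' * V s') ≤ ∑ s', P s a s' * V s'


lemma aux_contraction {S A : Type*} [Fintype S] [Fintype A] [Nonempty S]
    {π : S → A → ℝ} (hπ : IsPolicy π)
    {P : S → A → S → ℝ} (hP : ∀ s a, P s a ∈ stdSimplex ℝ S)
    {γ : ℝ} (hγ0 : 0 ≤ γ) (hγ1 : γ < 1) {f g : S → ℝ}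
    (h : ∀ s, f s - g s ≤ ∑ a, π s a * ∑ s', P s a s' * (γ * (f s' - g s'))) :
    ∀ s, f s ≤ g s := by
  have hne : (Finset.univ : Finset S).Nonempty := Finset.univ_nonempty
  set M := Finset.univ.sup' hne (fun s => f s - g s) with hMdef
  have hMle : ∀ s, f s - g s ≤ M := fun s => Finset.le_sup' (fun s => f s - g s) (Finset.mem_univ s)
  have key : M ≤ γ * M := by
    apply Finset.sup'_le
    intro s _
    refine le_trans (h s) ?_
    have hbd : ∀ a ∈ Finset.univ,
        π s a * ∑ s', P s a s' * (γ * (f s' - g s')) ≤ π s a * (γ * M) := by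
      intro a _
      refine mul_le_mul_of_nonneg_left ?_ ((hπ s).1 a)
      calc ∑ s', P s a s' * (γ * (f s' - g s'))
          ≤ ∑ s', P s a s' * (γ * M) := by
            apply Finset.sum_le_sum
            intro s' _
            exact mul_le_mul_of_nonneg_left
              (mul_le_mul_of_nonneg_left (hMle s') hγ0) ((hP s a).1 s')
        _ = γ * M := by rw [← Finset.sum_mul, (hP s a).2, one_mul]
    calc ∑ a, π s a * ∑ s', P s a s' * (γ * (f s' - g s'))
        ≤ ∑ a, π s a * (γ * M) := Finset.sum_le_sum hbd
      _ = γ * M := by rw [← Finset.sum_mul, (hπ s).2, one_mul]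
  have hM0 : M ≤ 0 := by nlinarith
  intro s
  linarith [hMle s]

lemma aux_TpiP_sub {S A : Type*} [Fintype S] [Fintype A]
    (π : S → A → ℝ) (r : S → A → S → ℝ) (γ : ℝ) (P : S → A → S → ℝ)
    (f g : S → ℝ) (s : S) :
    TpiP π r γ P f s - TpiP π r γ P g s
      = ∑ a, π s a * ∑ s', P s a s' * (γ * (f s' - g s')) := by
  unfold TpiP
  rw [← Finset.sum_sub_distrib]
  apply Finset.sum_congr rfl
  intro a _
  rw [← mul_sub, ← Finset.sum_sub_distrib]
  congr 1
  apply Finset.sum_congr rfl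
  intro s' _
  ring

theorem stmt18 {S A : Type*} [Fintype S] [Fintype A] [Nonempty S] [Nonempty A]
    (m : ℕ) (hm : 1 ≤ m)
    (W : Fin m → Set (S → ℝ))
    (hW : ∀ i, (W i).Nonempty ∧ IsCompact (W i) ∧ W i ⊆ stdSimplex ℝ S)
    (u : S → A → Fin m → ℝ) (hu : ∀ (s : S) (a : A), u s a ∈ stdSimplex ℝ (Fin m))
    (US : Set (S → A → S → ℝ))
    (hUS : US = {P : S → A → S → ℝ | ∃ w : Fin m → S → ℝ,
      (∀ i, w i ∈ W i) ∧ ∀ (s : S) (a : A), P s a = fun s' => ∑ i, u s a i * w i s'}) :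
    IsCompact US ∧ WeakSSPsa US ∧ WeakSATractable US := by
  classical
  set F : (Fin m → S → ℝ) → (S → A → S → ℝ) :=
    fun w s a s' => ∑ i, u s a i * w i s' with hF
  have hUSim : US = F '' (Set.univ.pi W) := by
    rw [hUS]
    ext P
    constructor
    · rintro ⟨w, hw, hPw⟩
      refine ⟨w, fun i _ => hw i, ?_⟩
      funext s a
      exact (hPw s a).symm
    · rintro ⟨w, hw, rfl⟩
      exact ⟨w, fun i => hw i (Set.mem_univ i), fun s a => rfl⟩
  have hFcont : Continuous F := by
    apply continuous_pi; intro s; apply continuous_pi; intro a; apply continuous_pi; intro s'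
    exact continuous_finset_sum _ fun i _ =>
      continuous_const.mul ((continuous_apply s').comp (continuous_apply i))
  have hcompact : IsCompact US := by
    rw [hUSim]
    exact (isCompact_univ_pi fun i => (hW i).2.1).image hFcont
  have hKernel : ∀ P ∈ US, ∀ (s : S) (a : A), P s a ∈ stdSimplex ℝ S := by
    intro P hP s a
    rw [hUSim] at hP
    obtain ⟨w, hw, rfl⟩ := hP
    have hwW : ∀ i, w i ∈ stdSimplex ℝ S := fun i => (hW i).2.2 (hw i (Set.mem_univ i))
    constructor
    · intro s'
      exact Finset.sum_nonneg fun i _ => mul_nonneg ((hu s a).1 i) ((hwW i).1 s')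
    · calc ∑ s', ∑ i, u s a i * w i s'
          = ∑ i, ∑ s', u s a i * w i s' := Finset.sum_comm
        _ = ∑ i, u s a i * ∑ s', w i s' := by
            apply Finset.sum_congr rfl; intro i _; rw [Finset.mul_sum]
        _ = ∑ i, u s a i := by
            apply Finset.sum_congr rfl; intro i _; rw [(hwW i).2, mul_one]
        _ = 1 := (hu s a).2
  have hrearr : ∀ (s : S) (a : A) (ww : Fin m → S → ℝ) (V : S → ℝ),
      ∑ s', (∑ i, u s a i * ww i s') * V s' = ∑ i, u s a i * ∑ s', ww i s' * V s' := by
    intro s a ww V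
    simp only [Finset.sum_mul]
    rw [Finset.sum_comm]
    apply Finset.sum_congr rfl
    intro i _
    rw [Finset.mul_sum]
    apply Finset.sum_congr rfl
    intro s' _
    ring
  have hssp : WeakSSPsa US := by
    intro V
    have hmin : ∀ i, ∃ w0 ∈ W i, ∀ w ∈ W i, ∑ s', w0 s' * V s' ≤ ∑ s', w s' * V s' := by
      intro i
      obtain ⟨w0, hw0, hmin⟩ := (hW i).2.1.exists_isMinOn (hW i).1
        (Continuous.continuousOn (continuous_finset_sum _ fun s' _ =>
          (continuous_apply s').mul continuous_const))
      exact ⟨w0, hw0, fun w hw => hmin hw⟩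
    choose w0 hw0W hw0min using hmin
    refine ⟨F w0, by rw [hUSim]; exact ⟨w0, fun i _ => hw0W i, rfl⟩, ?_⟩
    intro s a P hP
    rw [hUSim] at hP
    obtain ⟨w, hw, rfl⟩ := hP
    show ∑ s', (∑ i, u s a i * w0 i s') * V s' ≤ ∑ s', (∑ i, u s a i * w i s') * V s'
    rw [hrearr s a w0 V, hrearr s a w V]
    apply Finset.sum_le_sum
    intro i _
    exact mul_le_mul_of_nonneg_left (hw0min i (w i) (hw i (Set.mem_univ i))) ((hu s a).1 i)
  refine ⟨hcompact, hssp, ?_⟩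
  intro π hπ r hr γ hγ0 hγ1 v hv uhat huhat μ hμ
  -- boundedness of inner products over US
  have hbdd : ∀ (s : S) (a : A) (c : S → ℝ),
      BddBelow ((fun P : S → A → S → ℝ => ∑ s', P s a s' * c s') '' US) := by
    intro s a c
    refine ⟨-∑ s', |c s'|, ?_⟩
    rintro x ⟨P, hP, rfl⟩
    have hPk := hKernel P hP s a
    have h1 : ∀ s', -|c s'| ≤ P s a s' * c s' := by
      intro s'
      have hle1 : P s a s' ≤ 1 := by
        calc P s a s' ≤ ∑ s'', P s a s'' :=
              Finset.single_le_sum (fun s'' _ => hPk.1 s'') (Finset.mem_univ s')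
          _ = 1 := hPk.2
      have : |P s a s' * c s'| ≤ |c s'| := by
        rw [abs_mul, abs_of_nonneg (hPk.1 s')]
        calc P s a s' * |c s'| ≤ 1 * |c s'| :=
              mul_le_mul_of_nonneg_right hle1 (abs_nonneg _)
          _ = |c s'| := one_mul _
      linarith [neg_abs_le (P s a s' * c s'), this]
    calc -∑ s', |c s'| = ∑ s', -|c s'| := by rw [Finset.sum_neg_distrib]
      _ ≤ ∑ s', P s a s' * c s' := Finset.sum_le_sum fun s' _ => h1 s'
  -- uhat ≤ TpiP P uhat for all P in US
  have hle : ∀ P ∈ US, ∀ s, uhat s ≤ TpiP π r γ P uhat s := by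
    intro P hP s
    conv_lhs => rw [← huhat]
    show TpiHat US π r γ uhat s ≤ TpiP π r γ P uhat s
    unfold TpiHat TpiP minOver
    apply Finset.sum_le_sum
    intro a _
    refine mul_le_mul_of_nonneg_left ?_ ((hπ s).1 a)
    exact csInf_le (hbdd s a _) ⟨P, hP, rfl⟩
  -- uhat ≤ v P for all P in US
  have hcomp : ∀ P ∈ US, ∀ s, uhat s ≤ v P s := by
    intro P hP
    apply aux_contraction hπ (hKernel P hP) hγ0 hγ1
    intro s
    have h1 := hle P hP s
    have h2 : TpiP π r γ P (v P) s = v P s := congrFun (hv P hP) s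
    have h3 := aux_TpiP_sub π r γ P uhat (v P) s
    linarith
  -- P* from weak sa-SSP applied to uhat
  obtain ⟨Pstar, hPstarUS, hPstarmin⟩ := hssp uhat
  have hRind : ∀ (s : S) (a : A), ∀ P ∈ US,
      ∑ s', P s a s' * (r s a s' + γ * uhat s')
        = r s a (Classical.arbitrary S) + γ * ∑ s', P s a s' * uhat s' := by
    intro s a P hP
    have hPk := hKernel P hP s a
    calc ∑ s', P s a s' * (r s a s' + γ * uhat s')
        = ∑ s', (P s a s' * r s a (Classical.arbitrary S) + γ * (P s a s' * uhat s')) := by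
          apply Finset.sum_congr rfl
          intro s' _
          rw [hr s a s' (Classical.arbitrary S)]
          ring
      _ = (∑ s', P s a s' * r s a (Classical.arbitrary S))
            + γ * ∑ s', P s a s' * uhat s' := by
          rw [Finset.sum_add_distrib, Finset.mul_sum]
      _ = r s a (Classical.arbitrary S) + γ * ∑ s', P s a s' * uhat s' := by
          rw [← Finset.sum_mul, hPk.2, one_mul]
  have hminattain : ∀ (s : S) (a : A),
      minOver US (fun P => ∑ s', P s a s' * (r s a s' + γ * uhat s'))
        = ∑ s', Pstar s a s' * (r s a s' + γ * uhat s') := by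
    intro s a
    unfold minOver
    apply IsLeast.csInf_eq
    constructor
    · exact ⟨Pstar, hPstarUS, rfl⟩
    · rintro x ⟨P, hP, rfl⟩
      show ∑ s', Pstar s a s' * (r s a s' + γ * uhat s')
        ≤ ∑ s', P s a s' * (r s a s' + γ * uhat s')
      rw [hRind s a Pstar hPstarUS, hRind s a P hP]
      exact add_le_add (le_refl _) (mul_le_mul_of_nonneg_left (hPstarmin s a P hP) hγ0)
  have huhatfix : TpiP π r γ Pstar uhat = uhat := by
    funext s
    conv_rhs => rw [← huhat]
    show TpiP π r γ Pstar uhat s = TpiHat US π r γ uhat s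
    unfold TpiP TpiHat
    apply Finset.sum_congr rfl
    intro a _
    rw [hminattain s a]
  -- uhat = v Pstar
  have huv : ∀ s, uhat s = v Pstar s := by
    have d1 : ∀ s, uhat s ≤ v Pstar s := hcomp Pstar hPstarUS
    have d2 : ∀ s, v Pstar s ≤ uhat s := by
      apply aux_contraction hπ (hKernel Pstar hPstarUS) hγ0 hγ1
      intro s
      have e1 : TpiP π r γ Pstar (v Pstar) s = v Pstar s := congrFun (hv Pstar hPstarUS) s
      have e2 : TpiP π r γ Pstar uhat s = uhat s := congrFun huhatfix s
      have e3 := aux_TpiP_sub π r γ Pstar (v Pstar) uhat s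
      linarith
    exact fun s => le_antisymm (d1 s) (d2 s)
  unfold minOver
  apply IsLeast.csInf_eq
  constructor
  · refine ⟨Pstar, hPstarUS, ?_⟩
    show ∑ s, μ s * v Pstar s = ∑ s, μ s * uhat s
    apply Finset.sum_congr rfl
    intro s _
    rw [huv s]
  · rintro x ⟨P, hP, rfl⟩
    apply Finset.sum_le_sum
    intro s _
    exact mul_le_mul_of_nonneg_left (hcomp P hP s) (hμ.1 s)

end RMDP
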